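/- For every ξ ∈ ℝ³ ∖ {0} the matrices P⁰(ξ), P⁺(ξ), P⁻(ξ) are the spectral projections of curl_prin(ξ): (i) each of P⁰(ξ), P⁺(ξ), P⁻(ξ) is idempotent; (ii) the product of any two distinct ones is the zero matrix; (iii) P⁰(ξ) + P⁺(ξ) + P⁻(ξ) = I; (iv) each is self-adjoint with respect to the inner product ⟨u,v⟩ := Σ_{α,β} G^{αβ} conj(u_α) v_β on ℂ³ (equivalently G^{-1}·conj(P)ᵀ·G = P); (v) curl_prin(ξ)·P⁰(ξ) = 0, curl_prin(ξ)·P⁺(ξ) = ‖ξ‖·P⁺(ξ), curl_prin(ξ)·P⁻(ξ) = −‖ξ‖·P⁻(ξ); consequently curl_prin(ξ) = ‖ξ‖(P⁺(ξ) − P⁻(ξ)). -/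

import Mathlib

open Matrix

noncomputable section

/-- The totally antisymmetric symbol on three indices, with `ε_{123} = 1`. -/
def epsSym (i j k : Fin 3) : ℝ :=
  if (i, j, k) = (0, 1, 2) ∨ (i, j, k) = (1, 2, 0) ∨ (i, j, k) = (2, 0, 1) then 1
  else if (i, j, k) = (2, 1, 0) ∨ (i, j, k) = (1, 0, 2) ∨ (i, j, k) = (0, 2, 1) then -1
  else 0

/-- `‖ξ‖ := (Σ_{μ,ν} G^{μν} ξ_μ ξ_ν)^{1/2}`, the Riemannian norm of a covector. -/
def xiNorm (G : Matrix (Fin 3) (Fin 3) ℝ) (ξ : Fin 3 → ℝ) : ℝ :=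
  Real.sqrt (∑ μ, ∑ ν, G μ ν * ξ μ * ξ ν)

/-- The principal symbol of `curl = *d` acting on 1-forms. -/
def curlPrin (G : Matrix (Fin 3) (Fin 3) ℝ) (ξ : Fin 3 → ℝ) : Matrix (Fin 3) (Fin 3) ℂ :=
  Matrix.of fun α β =>
    -Complex.I *
      (((Real.sqrt G.det)⁻¹ * ∑ μ, ∑ ν, ∑ γ, epsSym α μ ν * G μ β * G ν γ * ξ γ : ℝ) : ℂ)

/-- `[P⁰(ξ)]_α{}^β := ‖ξ‖⁻² ξ_α Σ_γ G^{βγ} ξ_γ`  (formula (1.5) of the paper). -/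
def projZero (G : Matrix (Fin 3) (Fin 3) ℝ) (ξ : Fin 3 → ℝ) : Matrix (Fin 3) (Fin 3) ℂ :=
  Matrix.of fun α β => ((((xiNorm G ξ) ^ 2)⁻¹ * ξ α * ∑ γ, G β γ * ξ γ : ℝ) : ℂ)

/-- `[P^±(ξ)]_α{}^β := (1/2)[δ_α{}^β − [P⁰(ξ)]_α{}^β ± i‖ξ‖⁻¹ρ Σ ε_{αμν}G^{μγ}G^{νβ}ξ_γ]`
(formula (1.6) of the paper); `σ = 1` gives `P⁺` and `σ = −1` gives `P⁻`. -/
def projPM (σ : ℝ) (G : Matrix (Fin 3) (Fin 3) ℝ) (ξ : Fin 3 → ℝ) :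
    Matrix (Fin 3) (Fin 3) ℂ :=
  Matrix.of fun α β =>
    (1 / 2) * ((if α = β then 1 else 0) - projZero G ξ α β
      + (σ : ℂ) * Complex.I *
          ((((xiNorm G ξ))⁻¹ * (Real.sqrt G.det)⁻¹ *
            ∑ μ, ∑ ν, ∑ γ, epsSym α μ ν * G μ γ * G ν β * ξ γ : ℝ) : ℂ))


set_option maxHeartbeats 2000000

@[simp] lemma epsv000 : epsSym 0 0 0 = 0 := by rfl
@[simp] lemma epsv001 : epsSym 0 0 1 = 0 := by rfl
@[simp] lemma epsv002 : epsSym 0 0 2 = 0 := by rfl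
@[simp] lemma epsv010 : epsSym 0 1 0 = 0 := by rfl
@[simp] lemma epsv011 : epsSym 0 1 1 = 0 := by rfl
@[simp] lemma epsv012 : epsSym 0 1 2 = 1 := by rfl
@[simp] lemma epsv020 : epsSym 0 2 0 = 0 := by rfl
@[simp] lemma epsv021 : epsSym 0 2 1 = -1 := by rfl
@[simp] lemma epsv022 : epsSym 0 2 2 = 0 := by rfl
@[simp] lemma epsv100 : epsSym 1 0 0 = 0 := by rfl
@[simp] lemma epsv101 : epsSym 1 0 1 = 0 := by rfl
@[simp] lemma epsv102 : epsSym 1 0 2 = -1 := by rfl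
@[simp] lemma epsv110 : epsSym 1 1 0 = 0 := by rfl
@[simp] lemma epsv111 : epsSym 1 1 1 = 0 := by rfl
@[simp] lemma epsv112 : epsSym 1 1 2 = 0 := by rfl
@[simp] lemma epsv120 : epsSym 1 2 0 = 1 := by rfl
@[simp] lemma epsv121 : epsSym 1 2 1 = 0 := by rfl
@[simp] lemma epsv122 : epsSym 1 2 2 = 0 := by rfl
@[simp] lemma epsv200 : epsSym 2 0 0 = 0 := by rfl
@[simp] lemma epsv201 : epsSym 2 0 1 = 1 := by rfl
@[simp] lemma epsv202 : epsSym 2 0 2 = 0 := by rfl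
@[simp] lemma epsv210 : epsSym 2 1 0 = -1 := by rfl
@[simp] lemma epsv211 : epsSym 2 1 1 = 0 := by rfl
@[simp] lemma epsv212 : epsSym 2 1 2 = 0 := by rfl
@[simp] lemma epsv220 : epsSym 2 2 0 = 0 := by rfl
@[simp] lemma epsv221 : epsSym 2 2 1 = 0 := by rfl
@[simp] lemma epsv222 : epsSym 2 2 2 = 0 := by rfl

/-- `A` without the density factor. -/
def matAp (G : Matrix (Fin 3) (Fin 3) ℝ) (ξ : Fin 3 → ℝ) : Matrix (Fin 3) (Fin 3) ℂ :=
  Matrix.of fun α β =>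
    (((∑ μ, ∑ ν, ∑ γ, epsSym α μ ν * G μ β * G ν γ * ξ γ : ℝ)) : ℂ)
def wv (G : Matrix (Fin 3) (Fin 3) ℝ) (ξ : Fin 3 → ℝ) (ν : Fin 3) : ℝ := ∑ γ, G ν γ * ξ γ

set_option maxHeartbeats 2000000
variable (G : Matrix (Fin 3) (Fin 3) ℝ) (ξ : Fin 3 → ℝ)
lemma Qpos (G : Matrix (Fin 3) (Fin 3) ℝ) (h : G.PosDef) (ξ : Fin 3 → ℝ) (hξ : ξ ≠ 0) :
    0 < ∑ μ, ∑ ν, G μ ν * ξ μ * ξ ν := by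
  have h2 : 0 < star ξ ⬝ᵥ (G *ᵥ ξ) := h.dotProduct_mulVec_pos hξ
  simp only [dotProduct, Matrix.mulVec, Finset.mul_sum, star_trivial] at h2
  convert h2 using 1
  refine Finset.sum_congr rfl fun μ _ => Finset.sum_congr rfl fun ν _ => by ring

lemma matAp_eq (G : Matrix (Fin 3) (Fin 3) ℝ) (ξ : Fin 3 → ℝ) :
    matAp G ξ = Matrix.of ![
      ![(((G 1 0 * wv G ξ 2 - G 2 0 * wv G ξ 1) : ℝ) : ℂ),
        (((G 1 1 * wv G ξ 2 - G 2 1 * wv G ξ 1) : ℝ) : ℂ),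
        (((G 1 2 * wv G ξ 2 - G 2 2 * wv G ξ 1) : ℝ) : ℂ)],
      ![(((G 2 0 * wv G ξ 0 - G 0 0 * wv G ξ 2) : ℝ) : ℂ),
        (((G 2 1 * wv G ξ 0 - G 0 1 * wv G ξ 2) : ℝ) : ℂ),
        (((G 2 2 * wv G ξ 0 - G 0 2 * wv G ξ 2) : ℝ) : ℂ)],
      ![(((G 0 0 * wv G ξ 1 - G 1 0 * wv G ξ 0) : ℝ) : ℂ),
        (((G 0 1 * wv G ξ 1 - G 1 1 * wv G ξ 0) : ℝ) : ℂ),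
        (((G 0 2 * wv G ξ 1 - G 1 2 * wv G ξ 0) : ℝ) : ℂ)]] := by
  ext α β
  fin_cases α <;> fin_cases β <;>
  · simp [matAp, wv, Fin.sum_univ_three]
    push_cast
    ring

lemma curl_eq (G : Matrix (Fin 3) (Fin 3) ℝ) (ξ : Fin 3 → ℝ) :
    curlPrin G ξ = (-Complex.I * (((Real.sqrt G.det : ℝ) : ℂ))⁻¹) • matAp G ξ := by
  ext α β
  simp only [curlPrin, matAp, Matrix.smul_apply, Matrix.of_apply, smul_eq_mul]
  push_cast
  ring






lemma P0_idem (hpos : G.PosDef) (hξ : ξ ≠ 0) :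
    projZero G ξ * projZero G ξ = projZero G ξ := by
  have hQ := Qpos G hpos ξ hξ
  have hx : (xiNorm G ξ)^2 = ∑ μ, ∑ ν, G μ ν * ξ μ * ξ ν := Real.sq_sqrt hQ.le
  have hQC : ((∑ μ, ∑ ν, G μ ν * ξ μ * ξ ν : ℝ) : ℂ) ≠ 0 := by exact_mod_cast hQ.ne'
  ext α β
  simp only [Matrix.mul_apply, projZero, Matrix.of_apply, hx, Fin.sum_univ_three] at *
  push_cast at hQC ⊢
  field_simp

lemma Ap_P0 (hpos : G.PosDef) (hξ : ξ ≠ 0) :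
    matAp G ξ * projZero G ξ = 0 := by
  have hQ := Qpos G hpos ξ hξ
  have hx : (xiNorm G ξ)^2 = ∑ μ, ∑ ν, G μ ν * ξ μ * ξ ν := Real.sq_sqrt hQ.le
  have hQC : ((∑ μ, ∑ ν, G μ ν * ξ μ * ξ ν : ℝ) : ℂ) ≠ 0 := by exact_mod_cast hQ.ne'
  rw [matAp_eq]
  ext α β
  fin_cases α <;> fin_cases β <;>
  · simp only [Matrix.mul_apply, projZero, Matrix.of_apply, hx, Fin.sum_univ_three, wv,
      Matrix.zero_apply, Matrix.cons_val', Matrix.cons_val_zero, Matrix.cons_val_one,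
      Matrix.head_cons, Matrix.head_fin_const, Matrix.cons_val_fin_one, Fin.isValue]
    push_cast at hQC ⊢
    field_simp
    try refine Or.inl ?_
    try ring

lemma P0_Ap (hpos : G.PosDef) (hξ : ξ ≠ 0) :
    projZero G ξ * matAp G ξ = 0 := by
  have hQ := Qpos G hpos ξ hξ
  have hx : (xiNorm G ξ)^2 = ∑ μ, ∑ ν, G μ ν * ξ μ * ξ ν := Real.sq_sqrt hQ.le
  have hQC : ((∑ μ, ∑ ν, G μ ν * ξ μ * ξ ν : ℝ) : ℂ) ≠ 0 := by exact_mod_cast hQ.ne'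
  rw [matAp_eq]
  ext α β
  fin_cases α <;> fin_cases β <;>
  · simp only [Matrix.mul_apply, projZero, Matrix.of_apply, hx, Fin.sum_univ_three, wv,
      Matrix.zero_apply, Matrix.cons_val', Matrix.cons_val_zero, Matrix.cons_val_one,
      Matrix.head_cons, Matrix.head_fin_const, Matrix.cons_val_fin_one, Fin.isValue]
    push_cast at hQC ⊢
    field_simp
    try refine Or.inl ?_
    try ring





lemma P0H (hsym : G.IsSymm) (hpos : G.PosDef) (hξ : ξ ≠ 0) :
    (projZero G ξ)ᴴ * G.map Complex.ofReal = G.map Complex.ofReal * projZero G ξ := by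
  have hQ := Qpos G hpos ξ hξ
  have hx : (xiNorm G ξ)^2 = ∑ μ, ∑ ν, G μ ν * ξ μ * ξ ν := Real.sq_sqrt hQ.le
  have hQC : ((∑ μ, ∑ ν, G μ ν * ξ μ * ξ ν : ℝ) : ℂ) ≠ 0 := by exact_mod_cast hQ.ne'
  have h10 : G 1 0 = G 0 1 := hsym.apply 0 1
  have h20 : G 2 0 = G 0 2 := hsym.apply 0 2
  have h21 : G 2 1 = G 1 2 := hsym.apply 1 2
  ext α β
  fin_cases α <;> fin_cases β <;>
  · simp [Matrix.mul_apply, Matrix.conjTranspose_apply, Matrix.map_apply, projZero, hx,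
      Fin.sum_univ_three, Complex.conj_ofReal]
    push_cast at hQC ⊢
    simp only [h10, h20, h21] at hQC ⊢
    field_simp
    try refine Or.inl ?_
    try ring

lemma ApH (hsym : G.IsSymm) :
    (matAp G ξ)ᴴ * G.map Complex.ofReal = -(G.map Complex.ofReal * matAp G ξ) := by
  have h10 : G 1 0 = G 0 1 := hsym.apply 0 1
  have h20 : G 2 0 = G 0 2 := hsym.apply 0 2
  have h21 : G 2 1 = G 1 2 := hsym.apply 1 2
  rw [matAp_eq]
  ext α β
  fin_cases α <;> fin_cases β <;>
  · simp [Matrix.mul_apply, Matrix.conjTranspose_apply, Matrix.map_apply, wv,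
      Fin.sum_univ_three, Complex.conj_ofReal]
    push_cast
    simp only [h10, h20, h21]
    ring






lemma projPM_eq (σ : ℝ) :
    projPM σ G ξ = (2:ℂ)⁻¹ • ((1 : Matrix (Fin 3) (Fin 3) ℂ) - projZero G ξ
      - ((σ:ℂ) * Complex.I * ((xiNorm G ξ : ℝ):ℂ)⁻¹ * ((Real.sqrt G.det : ℝ):ℂ)⁻¹) •
          matAp G ξ) := by
  ext α β
  fin_cases α <;> fin_cases β <;>
  · simp [projPM, projZero, matAp, Matrix.one_apply, Fin.sum_univ_three]
    push_cast
    ring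




def matXi (G : Matrix (Fin 3) (Fin 3) ℝ) (ξ : Fin 3 → ℝ) : Matrix (Fin 3) (Fin 3) ℂ :=
  Matrix.of fun α β => ((ξ α * wv G ξ β : ℝ) : ℂ)

lemma matXi_eq (hpos : G.PosDef) (hξ : ξ ≠ 0) :
    matXi G ξ = ((∑ μ, ∑ ν, G μ ν * ξ μ * ξ ν : ℝ) : ℂ) • projZero G ξ := by
  have hQ := Qpos G hpos ξ hξ
  have hx : (xiNorm G ξ)^2 = ∑ μ, ∑ ν, G μ ν * ξ μ * ξ ν := Real.sq_sqrt hQ.le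
  have hQC : ((∑ μ, ∑ ν, G μ ν * ξ μ * ξ ν : ℝ) : ℂ) ≠ 0 := by exact_mod_cast hQ.ne'
  ext α β
  simp only [matXi, projZero, Matrix.smul_apply, Matrix.of_apply, hx, wv,
    Fin.sum_univ_three, smul_eq_mul] at *
  push_cast at hQC ⊢
  field_simp
  rw [eq_div_iff (by intro h; apply hQC; linear_combination h)]

lemma Ap_Ap (hsym : G.IsSymm) :
    matAp G ξ * matAp G ξ
      = ((G.det : ℝ) : ℂ) • matXi G ξ
        - (((G.det : ℝ) : ℂ) * ((∑ μ, ∑ ν, G μ ν * ξ μ * ξ ν : ℝ) : ℂ)) • 1 := by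
  have h10 : G 1 0 = G 0 1 := hsym.apply 0 1
  have h20 : G 2 0 = G 0 2 := hsym.apply 0 2
  have h21 : G 2 1 = G 1 2 := hsym.apply 1 2
  rw [matAp_eq, Matrix.det_fin_three]
  ext α β
  fin_cases α <;> fin_cases β <;>
  · simp [Matrix.mul_apply, matXi, Matrix.one_apply, Fin.sum_univ_three, wv]
    push_cast
    simp only [h10, h20, h21]
    ring

/-- **Theorem 1.3(b) of the paper, symbol level**: `P⁰, P⁺, P⁻` are the spectral
projections of `curl_prin(ξ)`: idempotent, mutually annihilating, summing to `I`,
self-adjoint for the inner product `⟨u,v⟩ = Σ G^{αβ} conj(u_α) v_β`, with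
`curl_prin(ξ) P⁰ = 0`, `curl_prin(ξ) P^± = ±‖ξ‖ P^±`, and consequently
`curl_prin(ξ) = ‖ξ‖ (P⁺ − P⁻)`. -/
theorem spectral_projections_of_curlPrin (G : Matrix (Fin 3) (Fin 3) ℝ)
    (hsym : G.IsSymm) (hpos : G.PosDef) (ξ : Fin 3 → ℝ) (hξ : ξ ≠ 0) :
    (projZero G ξ * projZero G ξ = projZero G ξ ∧
      projPM 1 G ξ * projPM 1 G ξ = projPM 1 G ξ ∧
      projPM (-1) G ξ * projPM (-1) G ξ = projPM (-1) G ξ) ∧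
    (projZero G ξ * projPM 1 G ξ = 0 ∧ projPM 1 G ξ * projZero G ξ = 0 ∧
      projZero G ξ * projPM (-1) G ξ = 0 ∧ projPM (-1) G ξ * projZero G ξ = 0 ∧
      projPM 1 G ξ * projPM (-1) G ξ = 0 ∧ projPM (-1) G ξ * projPM 1 G ξ = 0) ∧
    (projZero G ξ + projPM 1 G ξ + projPM (-1) G ξ = 1) ∧
    ((G.map Complex.ofReal)⁻¹ * (projZero G ξ)ᴴ * G.map Complex.ofReal = projZero G ξ ∧
      (G.map Complex.ofReal)⁻¹ * (projPM 1 G ξ)ᴴ * G.map Complex.ofReal = projPM 1 G ξ ∧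
      (G.map Complex.ofReal)⁻¹ * (projPM (-1) G ξ)ᴴ * G.map Complex.ofReal
        = projPM (-1) G ξ) ∧
    (curlPrin G ξ * projZero G ξ = 0 ∧
      curlPrin G ξ * projPM 1 G ξ = ((xiNorm G ξ : ℝ) : ℂ) • projPM 1 G ξ ∧
      curlPrin G ξ * projPM (-1) G ξ = (-((xiNorm G ξ : ℝ) : ℂ)) • projPM (-1) G ξ) ∧
    curlPrin G ξ = ((xiNorm G ξ : ℝ) : ℂ) • (projPM 1 G ξ - projPM (-1) G ξ) := by
  have hQ := Qpos G hpos ξ hξ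
  have hd := hpos.det_pos
  set P : Matrix (Fin 3) (Fin 3) ℂ := projZero G ξ with hPdef
  set N : Matrix (Fin 3) (Fin 3) ℂ := matAp G ξ with hNdef
  set K : Matrix (Fin 3) (Fin 3) ℂ := curlPrin G ξ with hKdef
  set Gc : Matrix (Fin 3) (Fin 3) ℂ := G.map Complex.ofReal with hGcdef
  set qc : ℂ := ((xiNorm G ξ : ℝ) : ℂ) with hqcdef
  set sc : ℂ := ((Real.sqrt G.det : ℝ) : ℂ) with hscdef
  have hqne : qc ≠ 0 := by
    simp only [hqcdef, ne_eq, Complex.ofReal_eq_zero]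
    exact (Real.sqrt_pos.2 hQ).ne'
  have hsne : sc ≠ 0 := by
    simp only [hscdef, ne_eq, Complex.ofReal_eq_zero]
    exact (Real.sqrt_pos.2 hd).ne'
  have hq2 : qc * qc = ((∑ μ, ∑ ν, G μ ν * ξ μ * ξ ν : ℝ) : ℂ) := by
    rw [hqcdef, ← Complex.ofReal_mul, xiNorm, Real.mul_self_sqrt hQ.le]
  have hs2 : sc * sc = ((G.det : ℝ) : ℂ) := by
    rw [hscdef, ← Complex.ofReal_mul, Real.mul_self_sqrt hd.le]
  have hPP : P * P = P := P0_idem G ξ hpos hξ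
  have hNP : N * P = 0 := Ap_P0 G ξ hpos hξ
  have hPN : P * N = 0 := P0_Ap G ξ hpos hξ
  have hNN : N * N = (sc * sc * (qc * qc)) • P - (sc * sc * (qc * qc)) • 1 := by
    rw [hNdef, Ap_Ap G ξ hsym, matXi_eq G ξ hpos hξ, smul_smul, hq2, hs2, mul_comm]
  have hKN : K = (-Complex.I * sc⁻¹) • N := curl_eq G ξ
  have hKP : K * P = 0 := by rw [hKN, Matrix.smul_mul, hNP, smul_zero]
  have hPK : P * K = 0 := by rw [hKN, Matrix.mul_smul, hPN, smul_zero]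
  have hKK : K * K = (qc * qc) • 1 - (qc * qc) • P := by
    rw [hKN, Matrix.smul_mul, Matrix.mul_smul, smul_smul, hNN]
    rw [show -Complex.I * sc⁻¹ * (-Complex.I * sc⁻¹) = -(sc⁻¹ * sc⁻¹) by
      linear_combination (sc⁻¹ * sc⁻¹) * Complex.I_sq]
    rw [smul_sub, smul_smul, smul_smul]
    rw [show -(sc⁻¹ * sc⁻¹) * (sc * sc * (qc * qc)) = -(qc*qc) by
      field_simp]
    module
  have hPp : projPM 1 G ξ = (2:ℂ)⁻¹ • 1 - (2:ℂ)⁻¹ • P + ((2:ℂ)⁻¹ * qc⁻¹) • K := by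
    rw [projPM_eq G ξ 1, hKN, ← hPdef, ← hqcdef, ← hscdef]
    push_cast
    module
  have hPm : projPM (-1) G ξ = (2:ℂ)⁻¹ • 1 - (2:ℂ)⁻¹ • P - ((2:ℂ)⁻¹ * qc⁻¹) • K := by
    rw [projPM_eq G ξ (-1), hKN, ← hPdef, ← hqcdef, ← hscdef]
    push_cast
    module
  -- adjoint helpers
  have hGcd : Gc.det = ((G.det : ℝ) : ℂ) := by
    rw [hGcdef, Matrix.det_fin_three, Matrix.det_fin_three]
    simp only [Matrix.map_apply]
    push_cast
    ring
  have hGu : IsUnit Gc.det := by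
    rw [hGcd]; exact isUnit_iff_ne_zero.2 (by exact_mod_cast hd.ne')
  have hPH : Pᴴ * Gc = Gc * P := P0H G ξ hsym hpos hξ
  have hNH : Nᴴ * Gc = -(Gc * N) := ApH G ξ hsym
  have hstar : star (-Complex.I * sc⁻¹) = -(-Complex.I * sc⁻¹) := by
    rw [hscdef]; simp [Complex.conj_ofReal]
  have hKH : Kᴴ * Gc = Gc * K := by
    rw [hKN, Matrix.conjTranspose_smul, Matrix.smul_mul, hNH, hstar, Matrix.mul_smul,
      neg_smul, smul_neg, neg_neg]
  have hstarq : star ((2:ℂ)⁻¹ * qc⁻¹) = (2:ℂ)⁻¹ * qc⁻¹ := by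
    rw [hqcdef]; simp [Complex.conj_ofReal]
  have hPpH : (projPM 1 G ξ)ᴴ * Gc = Gc * projPM 1 G ξ := by
    rw [hPp]
    simp only [Matrix.conjTranspose_add, Matrix.conjTranspose_sub, Matrix.conjTranspose_smul,
      Matrix.conjTranspose_one, hstarq, star_inv₀, star_ofNat, Matrix.add_mul, Matrix.sub_mul,
      Matrix.mul_add, Matrix.mul_sub, Matrix.smul_mul, Matrix.mul_smul, hPH, hKH,
      Matrix.one_mul, Matrix.mul_one]
  have hPmH : (projPM (-1) G ξ)ᴴ * Gc = Gc * projPM (-1) G ξ := by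
    rw [hPm]
    simp only [Matrix.conjTranspose_add, Matrix.conjTranspose_sub, Matrix.conjTranspose_smul,
      Matrix.conjTranspose_one, hstarq, star_inv₀, star_ofNat, Matrix.add_mul, Matrix.sub_mul,
      Matrix.mul_add, Matrix.mul_sub, Matrix.smul_mul, Matrix.mul_smul, hPH, hKH,
      Matrix.one_mul, Matrix.mul_one]
  refine ⟨⟨hPP, ?_, ?_⟩, ⟨?_, ?_, ?_, ?_, ?_, ?_⟩, ?_, ⟨?_, ?_, ?_⟩, ⟨hKP, ?_, ?_⟩, ?_⟩
  · rw [hPp]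
    simp only [Matrix.add_mul, Matrix.sub_mul, Matrix.mul_add, Matrix.mul_sub,
      Matrix.smul_mul, Matrix.mul_smul, Matrix.one_mul, Matrix.mul_one, hPP, hPK, hKP, hKK,
      smul_zero, smul_sub, smul_smul]
    match_scalars <;> field_simp <;> ring
  · rw [hPm]
    simp only [Matrix.add_mul, Matrix.sub_mul, Matrix.mul_add, Matrix.mul_sub,
      Matrix.smul_mul, Matrix.mul_smul, Matrix.one_mul, Matrix.mul_one, hPP, hPK, hKP, hKK,
      smul_zero, smul_sub, smul_smul]
    match_scalars <;> field_simp <;> ring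
  · rw [hPp]
    simp only [Matrix.add_mul, Matrix.sub_mul, Matrix.mul_add, Matrix.mul_sub,
      Matrix.smul_mul, Matrix.mul_smul, Matrix.one_mul, Matrix.mul_one, hPP, hPK, hKP, hKK,
      smul_zero, smul_sub, smul_smul]
    match_scalars <;> field_simp <;> ring
  · rw [hPp]
    simp only [Matrix.add_mul, Matrix.sub_mul, Matrix.mul_add, Matrix.mul_sub,
      Matrix.smul_mul, Matrix.mul_smul, Matrix.one_mul, Matrix.mul_one, hPP, hPK, hKP, hKK,
      smul_zero, smul_sub, smul_smul]
    match_scalars <;> field_simp <;> ring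
  · rw [hPm]
    simp only [Matrix.add_mul, Matrix.sub_mul, Matrix.mul_add, Matrix.mul_sub,
      Matrix.smul_mul, Matrix.mul_smul, Matrix.one_mul, Matrix.mul_one, hPP, hPK, hKP, hKK,
      smul_zero, smul_sub, smul_smul]
    match_scalars <;> field_simp <;> ring
  · rw [hPm]
    simp only [Matrix.add_mul, Matrix.sub_mul, Matrix.mul_add, Matrix.mul_sub,
      Matrix.smul_mul, Matrix.mul_smul, Matrix.one_mul, Matrix.mul_one, hPP, hPK, hKP, hKK,
      smul_zero, smul_sub, smul_smul]
    match_scalars <;> field_simp <;> ring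
  · rw [hPp, hPm]
    simp only [Matrix.add_mul, Matrix.sub_mul, Matrix.mul_add, Matrix.mul_sub,
      Matrix.smul_mul, Matrix.mul_smul, Matrix.one_mul, Matrix.mul_one, hPP, hPK, hKP, hKK,
      smul_zero, smul_sub, smul_smul]
    match_scalars <;> field_simp <;> ring
  · rw [hPp, hPm]
    simp only [Matrix.add_mul, Matrix.sub_mul, Matrix.mul_add, Matrix.mul_sub,
      Matrix.smul_mul, Matrix.mul_smul, Matrix.one_mul, Matrix.mul_one, hPP, hPK, hKP, hKK,
      smul_zero, smul_sub, smul_smul]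
    match_scalars <;> field_simp <;> ring
  · rw [hPp, hPm]; module
  · rw [mul_assoc, hPH, ← mul_assoc, Matrix.nonsing_inv_mul Gc hGu, Matrix.one_mul]
  · rw [mul_assoc, hPpH, ← mul_assoc, Matrix.nonsing_inv_mul Gc hGu, Matrix.one_mul]
  · rw [mul_assoc, hPmH, ← mul_assoc, Matrix.nonsing_inv_mul Gc hGu, Matrix.one_mul]
  · rw [hPp]
    simp only [Matrix.add_mul, Matrix.sub_mul, Matrix.mul_add, Matrix.mul_sub,
      Matrix.smul_mul, Matrix.mul_smul, Matrix.one_mul, Matrix.mul_one, hPP, hPK, hKP, hKK,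
      smul_zero, smul_sub, smul_smul, smul_add]
    match_scalars <;> field_simp <;> ring
  · rw [hPm]
    simp only [Matrix.add_mul, Matrix.sub_mul, Matrix.mul_add, Matrix.mul_sub,
      Matrix.smul_mul, Matrix.mul_smul, Matrix.one_mul, Matrix.mul_one, hPP, hPK, hKP, hKK,
      smul_zero, smul_sub, smul_smul, smul_add, neg_smul]
    match_scalars <;> field_simp <;> ring
  · rw [hPp, hPm]
    match_scalars <;> field_simp <;> ring
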